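/- Let (P, m, A) be a poset system and suppose a, b ∈ A are distinct elements with ub(a) ⊇ ub(b) and lb(a) ⊆ lb(b), where ub(x) = {y : x ≺ y} and lb(x) = {y : y ≺ x}. Then for every prime power q, k(P, m, A; q) = k(P, m, A \ {b}; q). -/

import Mathlib

/-
Common framework: pattern posets, pattern algebras and pattern groups
(in the sense of Isaacs), the spaces `L_P(q)` realizing the dual of the pattern
algebra, the co-adjoint action, poset systems `(P, m, A)` and their orbit counts
`k(P, m, A; q)`, and combinatorial operations on pattern posets, following
"On Higman's conjecture" by Pak and Soffer.
-/

open Matrix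

/-- A pattern poset on `{0,…,n-1}`: a strict partial order on `Fin n` that has the
standard order of the integers as a linear extension. -/
structure PatternPoset (n : ℕ) where
  lt : Fin n → Fin n → Prop
  lt_trans : ∀ {i j k : Fin n}, lt i j → lt j k → lt i k
  lt_le : ∀ {i j : Fin n}, lt i j → (i : ℕ) < (j : ℕ)

namespace PatternPoset

variable {n : ℕ}

theorem lt_irrefl (P : PatternPoset n) (i : Fin n) : ¬ P.lt i i :=
  fun h => Nat.lt_irrefl _ (P.lt_le h)

theorem ne_of_lt (P : PatternPoset n) {i j : Fin n} (h : P.lt i j) : i ≠ j := by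
  intro e; subst e; exact P.lt_irrefl i h

/-- The pattern algebra `𝒰_P(q)`, as a subspace of the `n × n` matrices:
matrices supported on the cells `(i,j)` with `i ≺ j`. -/
def patternAlg (P : PatternPoset n) (F : Type*) [Field F] :
    Submodule F (Matrix (Fin n) (Fin n) F) where
  carrier := {X | ∀ i j : Fin n, ¬ P.lt i j → X i j = 0}
  add_mem' := by
    intro a b ha hb i j h
    simp [Matrix.add_apply, ha i j h, hb i j h]
  zero_mem' := by intro i j h; simp
  smul_mem' := by
    intro c a ha i j h
    simp [Matrix.smul_apply, ha i j h]

theorem mul_mem_patternAlg {P : PatternPoset n} {F : Type*} [Field F]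
    {X Y : Matrix (Fin n) (Fin n) F} (hX : X ∈ P.patternAlg F) (hY : Y ∈ P.patternAlg F) :
    X * Y ∈ P.patternAlg F := by
  intro i j h
  rw [Matrix.mul_apply]
  apply Finset.sum_eq_zero
  intro k _
  by_cases h1 : P.lt i k
  · by_cases h2 : P.lt k j
    · exact absurd (P.lt_trans h1 h2) h
    · rw [hY k j h2, mul_zero]
  · rw [hX i k h1, zero_mul]

theorem pow_apply_ne_zero {P : PatternPoset n} {F : Type*} [Field F]
    {X : Matrix (Fin n) (Fin n) F} (hX : X ∈ P.patternAlg F) :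
    ∀ t (i j : Fin n), (X ^ t) i j ≠ 0 → (i : ℕ) + t ≤ (j : ℕ) := by
  intro t
  induction t with
  | zero =>
    intro i j h
    rw [pow_zero] at h
    by_cases hij : i = j
    · subst hij; simp
    · exact absurd (Matrix.one_apply_ne hij) h
  | succ t ih =>
    intro i j h
    rw [pow_succ, Matrix.mul_apply] at h
    obtain ⟨k, -, hk⟩ := Finset.exists_ne_zero_of_sum_ne_zero h
    have h1 : (X ^ t) i k ≠ 0 := fun e => hk (by rw [e, zero_mul])
    have h2 : X k j ≠ 0 := fun e => hk (by rw [e, mul_zero])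
    have h3 : P.lt k j := by by_contra hc; exact h2 (hX k j hc)
    have h4 := ih i k h1
    have h5 := P.lt_le h3
    omega

theorem pow_card_eq_zero {P : PatternPoset n} {F : Type*} [Field F]
    {X : Matrix (Fin n) (Fin n) F} (hX : X ∈ P.patternAlg F) : X ^ n = 0 := by
  ext i j
  simp only [Matrix.zero_apply]
  by_contra h
  have h1 := pow_apply_ne_zero hX n i j h
  have h2 := j.isLt
  omega

theorem pow_succ_mem_patternAlg {P : PatternPoset n} {F : Type*} [Field F]
    {X : Matrix (Fin n) (Fin n) F} (hX : X ∈ P.patternAlg F) (t : ℕ) :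
    X ^ (t + 1) ∈ P.patternAlg F := by
  induction t with
  | zero => simpa using hX
  | succ t ih => rw [pow_succ]; exact mul_mem_patternAlg ih hX

theorem inv_sub_one_mem {P : PatternPoset n} {F : Type*} [Field F]
    {a : (Matrix (Fin n) (Fin n) F)ˣ}
    (ha : ((a : Matrix (Fin n) (Fin n) F) - 1) ∈ P.patternAlg F) :
    (((a⁻¹ : (Matrix (Fin n) (Fin n) F)ˣ) : Matrix (Fin n) (Fin n) F) - 1)
      ∈ P.patternAlg F := by
  rcases Nat.eq_zero_or_pos n with hn | hn
  · subst hn; intro i j _; exact i.elim0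
  obtain ⟨m, rfl⟩ : ∃ m, n = m + 1 := ⟨n - 1, by omega⟩
  set X : Matrix (Fin (m + 1)) (Fin (m + 1)) F :=
    (a : Matrix (Fin (m + 1)) (Fin (m + 1)) F) - 1 with hXdef
  have hXmem : -X ∈ P.patternAlg F := (P.patternAlg F).neg_mem ha
  have hXn : (-X) ^ (m + 1) = 0 := pow_card_eq_zero hXmem
  have key : (∑ t ∈ Finset.range (m + 1), (-X) ^ t) *
      (a : Matrix (Fin (m + 1)) (Fin (m + 1)) F) = 1 := by
    have hgeom := geom_sum_mul (-X) (m + 1)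
    rw [hXn] at hgeom
    have ha' : (a : Matrix (Fin (m + 1)) (Fin (m + 1)) F) = -((-X) - 1) := by
      rw [hXdef]; abel
    rw [ha', mul_neg, hgeom]
    simp
  have hinv : ((a⁻¹ : (Matrix (Fin (m + 1)) (Fin (m + 1)) F)ˣ) :
        Matrix (Fin (m + 1)) (Fin (m + 1)) F)
      = ∑ t ∈ Finset.range (m + 1), (-X) ^ t :=
    Units.inv_eq_of_mul_eq_one_left key
  rw [hinv]
  have hsplit : (∑ t ∈ Finset.range (m + 1), (-X) ^ t) - 1
      = ∑ t ∈ Finset.range m, (-X) ^ (t + 1) := by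
    rw [Finset.sum_range_succ' (fun t => (-X) ^ t) m]
    simp
  rw [hsplit]
  exact Submodule.sum_mem _ (fun t _ => pow_succ_mem_patternAlg hXmem t)

theorem entry_cases {P : PatternPoset n} {F : Type*} [Field F]
    {M : Matrix (Fin n) (Fin n) F} (hM : (M - 1) ∈ P.patternAlg F)
    {i k : Fin n} (h : M i k ≠ 0) : i = k ∨ P.lt i k := by
  by_contra hc
  push_neg at hc
  apply h
  have h1 := hM i k hc.2
  have h2 : (1 : Matrix (Fin n) (Fin n) F) i k = 0 := Matrix.one_apply_ne hc.1
  calc M i k = (M - 1) i k + (1 : Matrix (Fin n) (Fin n) F) i k := by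
        simp [Matrix.sub_apply]
    _ = 0 := by rw [h1, h2, add_zero]

theorem conj_entry_zero {P : PatternPoset n} {F : Type*} [Field F]
    {A B Y : Matrix (Fin n) (Fin n) F}
    (hA : (A - 1) ∈ P.patternAlg F) (hB : (B - 1) ∈ P.patternAlg F)
    (i j : Fin n)
    (hzero : ∀ k l : Fin n, (i = k ∨ P.lt i k) → (l = j ∨ P.lt l j) → Y k l = 0) :
    (A * Y * B) i j = 0 := by
  rw [Matrix.mul_apply]
  apply Finset.sum_eq_zero
  intro l _
  rw [Matrix.mul_apply, Finset.sum_mul]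
  apply Finset.sum_eq_zero
  intro k _
  by_cases hAik : A i k = 0
  · rw [hAik, zero_mul, zero_mul]
  by_cases hBlj : B l j = 0
  · rw [hBlj, mul_zero]
  rw [hzero k l (entry_cases hA hAik) (entry_cases hB hBlj), mul_zero, zero_mul]

/-- The pattern group `U_P(q) = {1 + X : X ∈ 𝒰_P(q)}`, as a subgroup of the units of the
matrix ring. -/
def patternGroup (P : PatternPoset n) (F : Type*) [Field F] :
    Subgroup (Matrix (Fin n) (Fin n) F)ˣ where
  carrier := {g | ((g : Matrix (Fin n) (Fin n) F) - 1) ∈ P.patternAlg F}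
  one_mem' := by
    simp only [Set.mem_setOf_eq, Units.val_one, sub_self]
    exact (P.patternAlg F).zero_mem
  mul_mem' := by
    intro a b ha hb
    simp only [Set.mem_setOf_eq, Units.val_mul] at *
    have h : (a : Matrix (Fin n) (Fin n) F) * b - 1 =
        ((a : Matrix (Fin n) (Fin n) F) - 1) * ((b : Matrix (Fin n) (Fin n) F) - 1)
          + (((a : Matrix (Fin n) (Fin n) F) - 1) + ((b : Matrix (Fin n) (Fin n) F) - 1)) := by
      noncomm_ring
    rw [h]
    exact (P.patternAlg F).add_mem (mul_mem_patternAlg ha hb) ((P.patternAlg F).add_mem ha hb)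
  inv_mem' := fun ha => inv_sub_one_mem ha

/-- `k(P; q)`: the number of conjugacy classes of the pattern group `U_P(q)`. -/
noncomputable def kOf (P : PatternPoset n) (F : Type*) [Field F] : ℕ :=
  Nat.card (ConjClasses (P.patternGroup F))

/-- The chain poset `C_n`, whose pattern group is the full unitriangular group `U_n(q)`. -/
def chainPoset (n : ℕ) : PatternPoset n where
  lt i j := (i : ℕ) < (j : ℕ)
  lt_trans := fun h1 h2 => Nat.lt_trans h1 h2
  lt_le := fun h => h

/-- The induced subposet `P − m`, obtained by deleting the element `m`. -/
def delete (P : PatternPoset (n + 1)) (m : Fin (n + 1)) : PatternPoset n where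
  lt i j := P.lt (m.succAbove i) (m.succAbove j)
  lt_trans := fun h1 h2 => P.lt_trans h1 h2
  lt_le := fun {i j} h => by
    have h2 : m.succAbove i < m.succAbove j := by
      rw [Fin.lt_def]; exact P.lt_le h
    exact Fin.lt_def.mp (Fin.succAbove_lt_succAbove_iff.mp h2)

/-- The dual poset `P*`, relabeled by `i ↦ n + 1 − i` so that the standard order is
again a linear extension. -/
def dual (P : PatternPoset n) : PatternPoset n where
  lt i j := P.lt j.rev i.rev
  lt_trans := fun h1 h2 => P.lt_trans h2 h1
  lt_le := fun {i j} h => by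
    have h1 : j.rev < i.rev := by rw [Fin.lt_def]; exact P.lt_le h
    exact Fin.lt_def.mp (Fin.rev_lt_rev.mp h1)

/-- The disjoint union `P ⨿ Q` of two pattern posets. -/
def disjUnion {m n : ℕ} (P : PatternPoset m) (Q : PatternPoset n) :
    PatternPoset (m + n) where
  lt x y :=
    match finSumFinEquiv.symm x, finSumFinEquiv.symm y with
    | Sum.inl a, Sum.inl b => P.lt a b
    | Sum.inr a, Sum.inr b => Q.lt a b
    | _, _ => False
  lt_trans := by
    intro i j k hij hjk
    rcases hi : finSumFinEquiv.symm i with a | a <;>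
      rcases hj : finSumFinEquiv.symm j with b | b <;>
        rcases hk : finSumFinEquiv.symm k with c | c <;>
          simp only [hi, hj, hk] at hij hjk ⊢ <;>
            first
              | exact P.lt_trans hij hjk
              | exact Q.lt_trans hij hjk
  lt_le := by
    intro i j h
    rcases hi : finSumFinEquiv.symm i with a | a <;>
      rcases hj : finSumFinEquiv.symm j with b | b <;>
        simp only [hi, hj] at h
    · have hi' : i = Fin.castAdd _ a := by
        rw [← finSumFinEquiv_apply_left, ← hi, Equiv.apply_symm_apply]
      have hj' : j = Fin.castAdd _ b := by
        rw [← finSumFinEquiv_apply_left, ← hj, Equiv.apply_symm_apply]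
      rw [hi', hj']
      exact P.lt_le h
    · have hi' : i = Fin.natAdd _ a := by
        rw [← finSumFinEquiv_apply_right, ← hi, Equiv.apply_symm_apply]
      have hj' : j = Fin.natAdd _ b := by
        rw [← finSumFinEquiv_apply_right, ← hj, Equiv.apply_symm_apply]
      rw [hi', hj']
      simpa using Q.lt_le h

/-- The subspace of matrices quotiented away in `L_P(q)`:
those vanishing on all cells `(i,j)` with `j ≺ i`. -/
def lowQuot (P : PatternPoset n) (F : Type*) [Field F] :
    Submodule F (Matrix (Fin n) (Fin n) F) where
  carrier := {X | ∀ i j : Fin n, P.lt j i → X i j = 0}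
  add_mem' := by
    intro a b ha hb i j h
    simp [Matrix.add_apply, ha i j h, hb i j h]
  zero_mem' := by intro i j h; simp
  smul_mem' := by
    intro c a ha i j h
    simp [Matrix.smul_apply, ha i j h]

/-- The space `L_P(q)`, realizing the dual `𝒰_P(q)*` as a quotient of the
space of all `n × n` matrices. -/
abbrev LSpace (P : PatternPoset n) (F : Type*) [Field F] :=
  Matrix (Fin n) (Fin n) F ⧸ P.lowQuot F

end PatternPoset

/-- Conjugation `X ↦ g X g⁻¹` by a unit, as a linear map on matrices. -/
def conjLin {n : ℕ} (F : Type*) [Field F] (g : (Matrix (Fin n) (Fin n) F)ˣ) :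
    Matrix (Fin n) (Fin n) F →ₗ[F] Matrix (Fin n) (Fin n) F where
  toFun X := (g : Matrix (Fin n) (Fin n) F) * X *
    ((g⁻¹ : (Matrix (Fin n) (Fin n) F)ˣ) : Matrix (Fin n) (Fin n) F)
  map_add' X Y := by rw [mul_add, add_mul]
  map_smul' c X := by rw [mul_smul_comm, smul_mul_assoc]; rfl

namespace PatternPoset

variable {n : ℕ}

/-- The co-adjoint action `K_g(X) = g X g⁻¹` of the pattern group on `L_P(q)`. -/
noncomputable def coadj (P : PatternPoset n) (F : Type*) [Field F]
    (g : P.patternGroup F) : P.LSpace F →ₗ[F] P.LSpace F :=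
  Submodule.mapQ _ _ (conjLin F (g : (Matrix (Fin n) (Fin n) F)ˣ)) (by
    intro Y hY
    simp only [Submodule.mem_comap]
    have hg : ((g : (Matrix (Fin n) (Fin n) F)ˣ) : Matrix (Fin n) (Fin n) F) - 1
        ∈ P.patternAlg F := g.2
    have hginv : (((g : (Matrix (Fin n) (Fin n) F)ˣ)⁻¹ : (Matrix (Fin n) (Fin n) F)ˣ) :
        Matrix (Fin n) (Fin n) F) - 1 ∈ P.patternAlg F := inv_sub_one_mem g.2
    intro i j hji
    apply conj_entry_zero hg hginv
    intro k l hik hlj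
    apply hY k l
    rcases hik with rfl | hik <;> rcases hlj with rfl | hlj
    · exact hji
    · exact P.lt_trans hlj hji
    · exact P.lt_trans hji hik
    · exact P.lt_trans (P.lt_trans hlj hji) hik)

/-- The poset `P^(m)`: the poset on the same ground set whose only relations
are `x ≺ m` for `x ≺_P m`. -/
def restrictTo (P : PatternPoset n) (m : Fin n) : PatternPoset n where
  lt x y := y = m ∧ P.lt x y
  lt_trans := fun h1 h2 => ⟨h2.1, P.lt_trans h1.2 h2.2⟩
  lt_le := fun h => P.lt_le h.2

/-- The canonical projection `π : L_P(q) → L_{P^(m)}(q)`. -/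
noncomputable def projL (P : PatternPoset n) (m : Fin n) (F : Type*) [Field F] :
    P.LSpace F →ₗ[F] (P.restrictTo m).LSpace F :=
  Submodule.mapQ _ _ LinearMap.id (by
    intro X hX
    simp only [Submodule.mem_comap, LinearMap.id_coe, id_eq]
    intro i j h
    exact hX i j h.2)

end PatternPoset

/-- The elementary transvection `E_{i,j}(α) = 1 + α e_{i,j}` as a unit of the matrix ring. -/
def transvectionUnit {n : ℕ} {F : Type*} [Field F] (i j : Fin n) (hij : i ≠ j) (α : F) :
    (Matrix (Fin n) (Fin n) F)ˣ where
  val := 1 + Matrix.single i j α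
  inv := 1 + Matrix.single i j (-α)
  val_inv := by
    have h0 : Matrix.single i j α * Matrix.single i j (-α) = 0 :=
      Matrix.single_mul_single_of_ne _ _ _ _ hij.symm _
    have h1 : Matrix.single i j α + Matrix.single i j (-α) = 0 := by
      rw [← Matrix.single_add]; simp
    rw [add_mul, mul_add, mul_add, one_mul, mul_one, h0]
    rw [add_zero, add_assoc, one_mul, add_comm (Matrix.single i j (-α)), h1, add_zero]
  inv_val := by
    have h0 : Matrix.single i j (-α) * Matrix.single i j α = 0 :=
      Matrix.single_mul_single_of_ne _ _ _ _ hij.symm _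
    have h1 : Matrix.single i j (-α) + Matrix.single i j α = 0 := by
      rw [← Matrix.single_add]; simp
    rw [add_mul, mul_add, mul_add, one_mul, mul_one, h0]
    rw [add_zero, add_assoc, one_mul, add_comm (Matrix.single i j α), h1, add_zero]

/-- A poset system `(P, m, A)`: a pattern poset `P`, a maximal element `m`,
and an anti-chain `A ⊆ lb(m)`. -/
structure PosetSystem (n : ℕ) where
  P : PatternPoset n
  m : Fin n
  m_max : ∀ x, ¬ P.lt m x
  A : Finset (Fin n)
  A_lb : ∀ a ∈ A, P.lt a m
  A_anti : ∀ a ∈ A, ∀ b ∈ A, ¬ P.lt a b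

namespace PosetSystem

variable {n : ℕ}

/-- The element `1_A = Σ_{a ∈ A} e_{m,a}` of `L_{P^(m)}(q)`. -/
noncomputable def oneA (S : PosetSystem n) (F : Type*) [Field F] :
    (S.P.restrictTo S.m).LSpace F :=
  Submodule.Quotient.mk (∑ a ∈ S.A, Matrix.single S.m a (1 : F))

/-- The action of `U_P(q)` on `L_{P^(m)}(q)` induced by the co-adjoint action. -/
noncomputable def coadjQ (S : PosetSystem n) (F : Type*) [Field F]
    (g : S.P.patternGroup F) :
    (S.P.restrictTo S.m).LSpace F →ₗ[F] (S.P.restrictTo S.m).LSpace F :=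
  Submodule.mapQ _ _ (conjLin F (g : (Matrix (Fin n) (Fin n) F)ˣ)) (by
    intro Y hY
    simp only [Submodule.mem_comap]
    have hg : ((g : (Matrix (Fin n) (Fin n) F)ˣ) : Matrix (Fin n) (Fin n) F) - 1
        ∈ S.P.patternAlg F := g.2
    have hginv : (((g : (Matrix (Fin n) (Fin n) F)ˣ)⁻¹ : (Matrix (Fin n) (Fin n) F)ˣ) :
        Matrix (Fin n) (Fin n) F) - 1 ∈ S.P.patternAlg F :=
      PatternPoset.inv_sub_one_mem g.2
    intro i j hji
    obtain ⟨him, hjilt⟩ := hji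
    apply PatternPoset.conj_entry_zero hg hginv
    intro k l hik hlj
    have hk : k = S.m := by
      rcases hik with rfl | hik
      · exact him
      · rw [him] at hik; exact absurd hik (S.m_max k)
    have hlm : S.P.lt l S.m := by
      rcases hlj with rfl | hlj
      · rw [← him]; exact hjilt
      · rw [him] at hjilt; exact S.P.lt_trans hlj hjilt
    subst hk
    exact hY S.m l ⟨rfl, hlm⟩)

/-- The stabilizer of `1_A` in `U_P(q)` for the induced action on `L_{P^(m)}(q)`. -/
noncomputable def stab (S : PosetSystem n) (F : Type*) [Field F] :
    Set (S.P.patternGroup F) :=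
  {g | S.coadjQ F g (S.oneA F) = S.oneA F}

/-- The fiber `π⁻¹(1_A) ⊆ L_P(q)`. -/
noncomputable def fiber (S : PosetSystem n) (F : Type*) [Field F] :
    Set (S.P.LSpace F) :=
  {X | S.P.projL S.m F X = S.oneA F}

/-- `k(P, m, A; q)`: the number of orbits of `Stab_{U_P(q)}(1_A)` acting on the fiber
`π⁻¹(1_A)` under the co-adjoint action, counted as the number of distinct orbit sets. -/
noncomputable def systemK (S : PosetSystem n) (F : Type*) [Field F] : ℕ :=
  Nat.card {O : Set (S.P.LSpace F) // ∃ X ∈ S.fiber F,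
    O = {Y | ∃ g ∈ S.stab F, S.P.coadj F g X = Y}}

/-- The poset `D(S)`: delete from `P` every relation `(a, x)` with `a ∈ A`,
`a ≺ x ≺ m`, and `A ∩ lb(x) = {a}`. -/
def D (S : PosetSystem n) : PatternPoset n where
  lt x y := S.P.lt x y ∧
    ¬ (x ∈ S.A ∧ S.P.lt y S.m ∧ ∀ b ∈ S.A, S.P.lt b y → b = x)
  lt_trans := by
    rintro i j k ⟨hij, hi⟩ ⟨hjk, -⟩
    refine ⟨S.P.lt_trans hij hjk, ?_⟩
    rintro ⟨hiA, hkm, huniq⟩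
    exact hi ⟨hiA, S.P.lt_trans hjk hkm, fun b hb hbj => huniq b hb (S.P.lt_trans hbj hjk)⟩
  lt_le := fun h => S.P.lt_le h.1

/-- `D(S)` together with the same `m` and `A`, as a poset system. -/
def DSys (S : PosetSystem n) : PosetSystem n where
  P := S.D
  m := S.m
  m_max := fun x h => S.m_max x h.1
  A := S.A
  A_lb := fun a ha => ⟨S.A_lb a ha, fun h => S.P.lt_irrefl S.m h.2.1⟩
  A_anti := fun a ha b hb h => S.A_anti a ha b hb h.1

end PosetSystem

section Lemma45Aux

variable {n : ℕ} {F : Type*} [Field F]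

theorem conjLin_apply (g : (Matrix (Fin n) (Fin n) F)ˣ) (X : Matrix (Fin n) (Fin n) F) :
    conjLin F g X = (g : Matrix (Fin n) (Fin n) F) * X *
      ((g⁻¹ : (Matrix (Fin n) (Fin n) F)ˣ) : Matrix (Fin n) (Fin n) F) := rfl

theorem conjLin_conjLin (u v : (Matrix (Fin n) (Fin n) F)ˣ) (Y : Matrix (Fin n) (Fin n) F) :
    conjLin F u (conjLin F v Y) = conjLin F (u * v) Y := by
  simp [conjLin_apply, Units.val_mul, _root_.mul_inv_rev, Matrix.mul_assoc]

theorem conjLin_one (Y : Matrix (Fin n) (Fin n) F) : conjLin F 1 Y = Y := by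
  simp [conjLin_apply]

/-- Entry-wise formula for conjugation-type products with transvections. -/
theorem tvConj_apply (a b : Fin n) (α β : F) (Y : Matrix (Fin n) (Fin n) F) (i j : Fin n) :
    ((1 + Matrix.single a b α) * Y * (1 + Matrix.single a b β)) i j
      = Y i j + (if i = a then α * Y b j else 0) + (if j = b then Y i a * β else 0)
        + (if i = a ∧ j = b then α * Y b a * β else 0) := by
  have hexp : (1 + Matrix.single a b α) * Y * (1 + Matrix.single a b β)
      = Y + Matrix.single a b α * Y + Y * Matrix.single a b β
        + Matrix.single a b α * Y * Matrix.single a b β := by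
    noncomm_ring
  rw [hexp]
  by_cases hi : i = a <;> by_cases hj : j = b <;>
    simp [Matrix.add_apply, hi, hj, Matrix.single_apply, eq_comm (a := a), eq_comm (a := b)]

theorem tv_patternAlg (P : PatternPoset n) (a b : Fin n)
    (hub : ∀ y, P.lt b y → P.lt a y) (hlb : ∀ y, P.lt y a → P.lt y b)
    (α β : F) {X : Matrix (Fin n) (Fin n) F} (hX : X ∈ P.patternAlg F) :
    (1 + Matrix.single a b α) * X * (1 + Matrix.single a b β)
      ∈ P.patternAlg F := by
  intro i j hij
  rw [tvConj_apply, hX i j hij]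
  have hba : ¬ P.lt b a := fun h => P.lt_irrefl a (hub a h)
  have e2 : (if i = a then α * X b j else 0) = 0 := by
    split_ifs with h
    · rw [hX b j fun hbj => hij (by rw [h]; exact hub j hbj), mul_zero]
    · rfl
  have e3 : (if j = b then X i a * β else 0) = 0 := by
    split_ifs with h
    · rw [hX i a fun hia => hij (by rw [h]; exact hlb i hia), zero_mul]
    · rfl
  have e4 : (if i = a ∧ j = b then α * X b a * β else 0) = 0 := by
    split_ifs with h
    · rw [hX b a hba, mul_zero, zero_mul]
    · rfl
  rw [e2, e3, e4]; simp

theorem tv_lowQuot (P : PatternPoset n) (a b : Fin n)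
    (hub : ∀ y, P.lt b y → P.lt a y) (hlb : ∀ y, P.lt y a → P.lt y b)
    (α β : F) {Y : Matrix (Fin n) (Fin n) F} (hY : Y ∈ P.lowQuot F) :
    (1 + Matrix.single a b α) * Y * (1 + Matrix.single a b β)
      ∈ P.lowQuot F := by
  intro i j hji
  rw [tvConj_apply, hY i j hji]
  have e2 : (if i = a then α * Y b j else 0) = 0 := by
    split_ifs with h
    · rw [hY b j (hlb j (by rw [← h]; exact hji)), mul_zero]
    · rfl
  have e3 : (if j = b then Y i a * β else 0) = 0 := by
    split_ifs with h
    · rw [hY i a (hub i (by rw [← h]; exact hji)), zero_mul]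
    · rfl
  have e4 : (if i = a ∧ j = b then α * Y b a * β else 0) = 0 := by
    split_ifs with h
    · obtain ⟨h1, h2⟩ := h
      rw [h1, h2] at hji
      exact (P.lt_irrefl a (hub a hji)).elim
    · rfl
  rw [e2, e3, e4]; simp

theorem tv_lowQuotQ (P : PatternPoset n) (m a b : Fin n) (ham : P.lt a m)
    (α β : F) {Y : Matrix (Fin n) (Fin n) F} (hY : Y ∈ (P.restrictTo m).lowQuot F) :
    (1 + Matrix.single a b α) * Y * (1 + Matrix.single a b β)
      ∈ (P.restrictTo m).lowQuot F := by
  have hanm : a ≠ m := P.ne_of_lt ham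
  intro i j hji
  obtain ⟨him, hjm⟩ := hji
  rw [tvConj_apply, hY i j ⟨him, hjm⟩]
  have hia : i ≠ a := by rw [him]; exact fun h => hanm h.symm
  have e2 : (if i = a then α * Y b j else 0) = 0 := by
    rw [if_neg hia]
  have e3 : (if j = b then Y i a * β else 0) = 0 := by
    split_ifs with h
    · rw [hY i a ⟨him, by rw [him]; exact ham⟩, zero_mul]
    · rfl
  have e4 : (if i = a ∧ j = b then α * Y b a * β else 0) = 0 := by
    rw [if_neg (fun h => hia h.1)]
  rw [e2, e3, e4]; simp

end Lemma45Aux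
/-- If conjugation by a unit `g0` preserves the pattern group, `lowQuot P` and
`lowQuot P^(m)`, and maps `1_A` to `1_{A'}` at the matrix level, then the two poset
systems have the same orbit count. -/
theorem systemK_eq_of_conj {n : ℕ} {P : PatternPoset n} {m : Fin n}
    {hmax : ∀ x, ¬ P.lt m x} {A A' : Finset (Fin n)}
    {hA : ∀ x ∈ A, P.lt x m} {hA' : ∀ x ∈ A', P.lt x m}
    {hAa : ∀ x ∈ A, ∀ y ∈ A, ¬ P.lt x y} {hAa' : ∀ x ∈ A', ∀ y ∈ A', ¬ P.lt x y}
    (F : Type) [Field F] (g0 : (Matrix (Fin n) (Fin n) F)ˣ)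
    (hpgF : ∀ g ∈ P.patternGroup F, g0 * g * g0⁻¹ ∈ P.patternGroup F)
    (hpgB : ∀ g ∈ P.patternGroup F, g0⁻¹ * g * g0 ∈ P.patternGroup F)
    (hlPF : ∀ Y ∈ P.lowQuot F, conjLin F g0 Y ∈ P.lowQuot F)
    (hlPB : ∀ Y ∈ P.lowQuot F, conjLin F g0⁻¹ Y ∈ P.lowQuot F)
    (hlQF : ∀ Y ∈ (P.restrictTo m).lowQuot F, conjLin F g0 Y ∈ (P.restrictTo m).lowQuot F)
    (hlQB : ∀ Y ∈ (P.restrictTo m).lowQuot F, conjLin F g0⁻¹ Y ∈ (P.restrictTo m).lowQuot F)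
    (hone : conjLin F g0 (∑ c ∈ A, Matrix.single m c (1 : F))
      = ∑ c ∈ A', Matrix.single m c (1 : F)) :
    PosetSystem.systemK ⟨P, m, hmax, A, hA, hAa⟩ F
      = PosetSystem.systemK ⟨P, m, hmax, A', hA', hAa'⟩ F := by
  classical
  set S : PosetSystem n := ⟨P, m, hmax, A, hA, hAa⟩ with hS
  set S' : PosetSystem n := ⟨P, m, hmax, A', hA', hAa'⟩ with hS'
  let Φ : P.LSpace F →ₗ[F] P.LSpace F :=
    Submodule.mapQ _ _ (conjLin F g0) (fun Y hY => hlPF Y hY)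
  let Φ' : P.LSpace F →ₗ[F] P.LSpace F :=
    Submodule.mapQ _ _ (conjLin F g0⁻¹) (fun Y hY => hlPB Y hY)
  let Ψ : (P.restrictTo m).LSpace F →ₗ[F] (P.restrictTo m).LSpace F :=
    Submodule.mapQ _ _ (conjLin F g0) (fun Y hY => hlQF Y hY)
  let Ψ' : (P.restrictTo m).LSpace F →ₗ[F] (P.restrictTo m).LSpace F :=
    Submodule.mapQ _ _ (conjLin F g0⁻¹) (fun Y hY => hlQB Y hY)
  have hΦ'Φ : ∀ X, Φ' (Φ X) = X := by
    intro X
    obtain ⟨Y, rfl⟩ := Submodule.Quotient.mk_surjective _ X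
    show Φ' (Φ (Submodule.Quotient.mk Y)) = _
    simp only [Φ, Φ', Submodule.mapQ_apply, conjLin_conjLin, inv_mul_cancel, conjLin_one]
  have hΦΦ' : ∀ X, Φ (Φ' X) = X := by
    intro X
    obtain ⟨Y, rfl⟩ := Submodule.Quotient.mk_surjective _ X
    show Φ (Φ' (Submodule.Quotient.mk Y)) = _
    simp only [Φ, Φ', Submodule.mapQ_apply, conjLin_conjLin, mul_inv_cancel, conjLin_one]
  have hΨ'Ψ : ∀ X, Ψ' (Ψ X) = X := by
    intro X
    obtain ⟨Y, rfl⟩ := Submodule.Quotient.mk_surjective _ X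
    show Ψ' (Ψ (Submodule.Quotient.mk Y)) = _
    simp only [Ψ, Ψ', Submodule.mapQ_apply, conjLin_conjLin, inv_mul_cancel, conjLin_one]
  -- intertwining with the co-adjoint action
  have hcoadjF : ∀ (g : P.patternGroup F) (X : P.LSpace F),
      P.coadj F ⟨g0 * (g : (Matrix (Fin n) (Fin n) F)ˣ) * g0⁻¹, hpgF _ g.2⟩ (Φ X)
        = Φ (P.coadj F g X) := by
    intro g X
    obtain ⟨Y, rfl⟩ := Submodule.Quotient.mk_surjective _ X
    show P.coadj F _ (Φ (Submodule.Quotient.mk Y)) = Φ (P.coadj F g (Submodule.Quotient.mk Y))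
    simp only [Φ, Submodule.mapQ_apply, PatternPoset.coadj, conjLin_conjLin]
    congr 2
    group
  have hcoadjB : ∀ (g : P.patternGroup F) (X : P.LSpace F),
      P.coadj F ⟨g0⁻¹ * (g : (Matrix (Fin n) (Fin n) F)ˣ) * g0, hpgB _ g.2⟩ (Φ' X)
        = Φ' (P.coadj F g X) := by
    intro g X
    obtain ⟨Y, rfl⟩ := Submodule.Quotient.mk_surjective _ X
    show P.coadj F _ (Φ' (Submodule.Quotient.mk Y)) = Φ' (P.coadj F g (Submodule.Quotient.mk Y))
    simp only [Φ', Submodule.mapQ_apply, PatternPoset.coadj, conjLin_conjLin]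
    congr 2
    group
  have hcoadjQF : ∀ (g : P.patternGroup F) (X : (P.restrictTo m).LSpace F),
      S'.coadjQ F ⟨g0 * (g : (Matrix (Fin n) (Fin n) F)ˣ) * g0⁻¹, hpgF _ g.2⟩ (Ψ X)
        = Ψ (S.coadjQ F g X) := by
    intro g X
    obtain ⟨Y, rfl⟩ := Submodule.Quotient.mk_surjective _ X
    show S'.coadjQ F _ (Ψ (Submodule.Quotient.mk Y)) = Ψ (S.coadjQ F g (Submodule.Quotient.mk Y))
    simp only [Ψ, Submodule.mapQ_apply, PosetSystem.coadjQ, conjLin_conjLin]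
    congr 2
    group
  have hcoadjQB : ∀ (g : P.patternGroup F) (X : (P.restrictTo m).LSpace F),
      S.coadjQ F ⟨g0⁻¹ * (g : (Matrix (Fin n) (Fin n) F)ˣ) * g0, hpgB _ g.2⟩ (Ψ' X)
        = Ψ' (S'.coadjQ F g X) := by
    intro g X
    obtain ⟨Y, rfl⟩ := Submodule.Quotient.mk_surjective _ X
    show S.coadjQ F _ (Ψ' (Submodule.Quotient.mk Y)) = Ψ' (S'.coadjQ F g (Submodule.Quotient.mk Y))
    simp only [Ψ', Submodule.mapQ_apply, PosetSystem.coadjQ, conjLin_conjLin]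
    congr 2
    group
  -- 1_A is mapped to 1_{A'}
  have honeF : Ψ (S.oneA F) = S'.oneA F := by
    show Ψ (Submodule.Quotient.mk _) = Submodule.Quotient.mk _
    simp only [Ψ, Submodule.mapQ_apply]
    exact congrArg _ hone
  have honeB : Ψ' (S'.oneA F) = S.oneA F := by
    rw [← honeF, hΨ'Ψ]
  -- stabilizers correspond
  have hstabF : ∀ g ∈ S.stab F,
      (⟨g0 * (g : (Matrix (Fin n) (Fin n) F)ˣ) * g0⁻¹, hpgF _ g.2⟩ : P.patternGroup F)
        ∈ S'.stab F := by
    intro g hg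
    show S'.coadjQ F _ (S'.oneA F) = S'.oneA F
    rw [← honeF, hcoadjQF, hg]
  have hstabB : ∀ g ∈ S'.stab F,
      (⟨g0⁻¹ * (g : (Matrix (Fin n) (Fin n) F)ˣ) * g0, hpgB _ g.2⟩ : P.patternGroup F)
        ∈ S.stab F := by
    intro g hg
    show S.coadjQ F _ (S.oneA F) = S.oneA F
    rw [← honeB, hcoadjQB, hg]
  -- projections commute
  have hprojF : ∀ X, P.projL m F (Φ X) = Ψ (P.projL m F X) := by
    intro X
    obtain ⟨Y, rfl⟩ := Submodule.Quotient.mk_surjective _ X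
    show P.projL m F (Φ (Submodule.Quotient.mk Y)) = Ψ (P.projL m F (Submodule.Quotient.mk Y))
    simp only [Φ, Ψ, Submodule.mapQ_apply, PatternPoset.projL, LinearMap.id_coe, id_eq]
  have hprojB : ∀ X, P.projL m F (Φ' X) = Ψ' (P.projL m F X) := by
    intro X
    obtain ⟨Y, rfl⟩ := Submodule.Quotient.mk_surjective _ X
    show P.projL m F (Φ' (Submodule.Quotient.mk Y)) = Ψ' (P.projL m F (Submodule.Quotient.mk Y))
    simp only [Φ', Ψ', Submodule.mapQ_apply, PatternPoset.projL, LinearMap.id_coe, id_eq]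
  -- fibers correspond
  have hfibF : ∀ X ∈ S.fiber F, Φ X ∈ S'.fiber F := by
    intro X hX
    show P.projL m F (Φ X) = S'.oneA F
    rw [hprojF, hX, honeF]
  have hfibB : ∀ X ∈ S'.fiber F, Φ' X ∈ S.fiber F := by
    intro X hX
    show P.projL m F (Φ' X) = S.oneA F
    rw [hprojB, hX, honeB]
  -- orbits correspond
  have horbF : ∀ X : P.LSpace F, Φ '' {Y | ∃ g ∈ S.stab F, P.coadj F g X = Y}
      = {Y | ∃ g ∈ S'.stab F, P.coadj F g (Φ X) = Y} := by
    intro X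
    ext Z
    constructor
    · rintro ⟨W, ⟨g, hg, rfl⟩, rfl⟩
      exact ⟨_, hstabF g hg, hcoadjF g X⟩
    · rintro ⟨h, hh, rfl⟩
      refine ⟨P.coadj F ⟨g0⁻¹ * (h : (Matrix (Fin n) (Fin n) F)ˣ) * g0, hpgB _ h.2⟩ X,
        ⟨_, hstabB h hh, rfl⟩, ?_⟩
      conv_lhs => rw [← hΦ'Φ X]
      rw [hcoadjB, hΦΦ']
  have horbB : ∀ X : P.LSpace F, Φ' '' {Y | ∃ g ∈ S'.stab F, P.coadj F g X = Y}
      = {Y | ∃ g ∈ S.stab F, P.coadj F g (Φ' X) = Y} := by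
    intro X
    ext Z
    constructor
    · rintro ⟨W, ⟨g, hg, rfl⟩, rfl⟩
      exact ⟨_, hstabB g hg, hcoadjB g X⟩
    · rintro ⟨h, hh, rfl⟩
      refine ⟨P.coadj F ⟨g0 * (h : (Matrix (Fin n) (Fin n) F)ˣ) * g0⁻¹, hpgF _ h.2⟩ X,
        ⟨_, hstabF h hh, rfl⟩, ?_⟩
      conv_lhs => rw [← hΦΦ' X]
      rw [hcoadjF, hΦ'Φ]
  -- conclude
  unfold PosetSystem.systemK
  refine Nat.card_congr ⟨fun O => ⟨Φ '' O.1, ?_⟩, fun O => ⟨Φ' '' O.1, ?_⟩, ?_, ?_⟩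
  · obtain ⟨X, hX, hO⟩ := O.2
    exact ⟨Φ X, hfibF X hX, by rw [hO, horbF]⟩
  · obtain ⟨X, hX, hO⟩ := O.2
    exact ⟨Φ' X, hfibB X hX, by rw [hO, horbB]⟩
  · intro O
    apply Subtype.ext
    show Φ' '' (Φ '' O.1) = O.1
    rw [Set.image_image]
    calc (fun x => Φ' (Φ x)) '' O.1 = id '' O.1 := Set.image_congr fun x _ => hΦ'Φ x
      _ = O.1 := Set.image_id _
  · intro O
    apply Subtype.ext
    show Φ '' (Φ' '' O.1) = O.1
    rw [Set.image_image]
    calc (fun x => Φ (Φ' x)) '' O.1 = id '' O.1 := Set.image_congr fun x _ => hΦΦ' x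
      _ = O.1 := Set.image_id _
/-- **Lemma 4.5**: if `a, b ∈ A` are distinct with `ub(a) ⊇ ub(b)` and `lb(a) ⊆ lb(b)`,
then `k(P, m, A; q) = k(P, m, A \\ {b}; q)`. -/
theorem systemK_erase (n : ℕ) (S : PosetSystem n) (a b : Fin n)
    (ha : a ∈ S.A) (hb : b ∈ S.A) (hab : a ≠ b)
    (hub : ∀ y, S.P.lt b y → S.P.lt a y)
    (hlb : ∀ y, S.P.lt y a → S.P.lt y b)
    (F : Type) [Field F] [Fintype F] (hq : IsPrimePow (Fintype.card F)) :
    S.systemK F = PosetSystem.systemK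
      ⟨S.P, S.m, S.m_max, S.A.erase b,
        fun x hx => S.A_lb x (Finset.mem_of_mem_erase hx),
        fun x hx y hy =>
          S.A_anti x (Finset.mem_of_mem_erase hx) y (Finset.mem_of_mem_erase hy)⟩ F := by

  classical
  have ham : S.P.lt a S.m := S.A_lb a ha
  have hbm : S.P.lt b S.m := S.A_lb b hb
  have hanm : a ≠ S.m := S.P.ne_of_lt ham
  have hbnm : b ≠ S.m := S.P.ne_of_lt hbm
  set g0 := transvectionUnit a b hab (1 : F) with hg0def
  have hval : (g0 : Matrix (Fin n) (Fin n) F) = 1 + Matrix.single a b (1 : F) := rfl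
  have hvalinv : ((g0⁻¹ : (Matrix (Fin n) (Fin n) F)ˣ) : Matrix (Fin n) (Fin n) F)
      = 1 + Matrix.single a b (-1 : F) := rfl
  have hpgF : ∀ g ∈ S.P.patternGroup F, g0 * g * g0⁻¹ ∈ S.P.patternGroup F := by
    intro g hg
    show ((g0 * g * g0⁻¹ : (Matrix (Fin n) (Fin n) F)ˣ) : Matrix (Fin n) (Fin n) F) - 1
      ∈ S.P.patternAlg F
    have hrw : ((g0 * g * g0⁻¹ : (Matrix (Fin n) (Fin n) F)ˣ) : Matrix (Fin n) (Fin n) F) - 1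
        = (g0 : Matrix (Fin n) (Fin n) F) * ((g : Matrix (Fin n) (Fin n) F) - 1) *
          ((g0⁻¹ : (Matrix (Fin n) (Fin n) F)ˣ) : Matrix (Fin n) (Fin n) F) := by
      rw [Units.val_mul, Units.val_mul]
      calc (g0 : Matrix (Fin n) (Fin n) F) * g * ↑g0⁻¹ - 1
          = (g0 : Matrix (Fin n) (Fin n) F) * ((g : Matrix (Fin n) (Fin n) F) - 1) * ↑g0⁻¹
            + ((g0 : Matrix (Fin n) (Fin n) F) * ↑g0⁻¹ - 1) := by noncomm_ring
        _ = _ := by rw [Units.mul_inv, sub_self, add_zero]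
    rw [hrw, hval, hvalinv]
    exact tv_patternAlg S.P a b hub hlb 1 (-1) hg
  have hpgB : ∀ g ∈ S.P.patternGroup F, g0⁻¹ * g * g0 ∈ S.P.patternGroup F := by
    intro g hg
    show ((g0⁻¹ * g * g0 : (Matrix (Fin n) (Fin n) F)ˣ) : Matrix (Fin n) (Fin n) F) - 1
      ∈ S.P.patternAlg F
    have hrw : ((g0⁻¹ * g * g0 : (Matrix (Fin n) (Fin n) F)ˣ) : Matrix (Fin n) (Fin n) F) - 1
        = ((g0⁻¹ : (Matrix (Fin n) (Fin n) F)ˣ) : Matrix (Fin n) (Fin n) F) *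
          ((g : Matrix (Fin n) (Fin n) F) - 1) * (g0 : Matrix (Fin n) (Fin n) F) := by
      rw [Units.val_mul, Units.val_mul]
      calc ((g0⁻¹ : (Matrix (Fin n) (Fin n) F)ˣ) : Matrix (Fin n) (Fin n) F) * g * ↑g0 - 1
          = ((g0⁻¹ : (Matrix (Fin n) (Fin n) F)ˣ) : Matrix (Fin n) (Fin n) F) *
              ((g : Matrix (Fin n) (Fin n) F) - 1) * ↑g0
            + (((g0⁻¹ : (Matrix (Fin n) (Fin n) F)ˣ) : Matrix (Fin n) (Fin n) F) * ↑g0 - 1) := by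
            noncomm_ring
        _ = _ := by rw [Units.inv_mul, sub_self, add_zero]
    rw [hrw, hval, hvalinv]
    exact tv_patternAlg S.P a b hub hlb (-1) 1 hg
  have hlPF : ∀ Y ∈ S.P.lowQuot F, conjLin F g0 Y ∈ S.P.lowQuot F := by
    intro Y hY
    rw [conjLin_apply, hval, hvalinv]
    exact tv_lowQuot S.P a b hub hlb 1 (-1) hY
  have hlPB : ∀ Y ∈ S.P.lowQuot F, conjLin F g0⁻¹ Y ∈ S.P.lowQuot F := by
    intro Y hY
    rw [conjLin_apply, inv_inv, hval, hvalinv]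
    exact tv_lowQuot S.P a b hub hlb (-1) 1 hY
  have hlQF : ∀ Y ∈ (S.P.restrictTo S.m).lowQuot F,
      conjLin F g0 Y ∈ (S.P.restrictTo S.m).lowQuot F := by
    intro Y hY
    rw [conjLin_apply, hval, hvalinv]
    exact tv_lowQuotQ S.P S.m a b ham 1 (-1) hY
  have hlQB : ∀ Y ∈ (S.P.restrictTo S.m).lowQuot F,
      conjLin F g0⁻¹ Y ∈ (S.P.restrictTo S.m).lowQuot F := by
    intro Y hY
    rw [conjLin_apply, inv_inv, hval, hvalinv]
    exact tv_lowQuotQ S.P S.m a b ham (-1) 1 hY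
  have hM : ∀ (B : Finset (Fin n)) (i j : Fin n),
      (∑ c ∈ B, Matrix.single S.m c (1 : F)) i j
        = if i = S.m ∧ j ∈ B then (1 : F) else 0 := by
    intro B i j
    rw [Matrix.sum_apply]
    simp only [Matrix.single, Matrix.of_apply]
    by_cases him : i = S.m
    · subst him
      simp
    · have h0 : ∀ c, (if S.m = i ∧ c = j then (1 : F) else 0) = 0 :=
        fun c => if_neg (fun h => him h.1.symm)
      rw [Finset.sum_congr rfl (fun c _ => h0 c), Finset.sum_const_zero,
        if_neg (fun h => him h.1)]
  have hone : conjLin F g0 (∑ c ∈ S.A, Matrix.single S.m c (1 : F))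
      = ∑ c ∈ S.A.erase b, Matrix.single S.m c (1 : F) := by
    rw [conjLin_apply, hval, hvalinv]
    ext i j
    rw [tvConj_apply]
    simp only [hM]
    by_cases him : i = S.m <;> by_cases hj : j = b <;>
      simp [him, hj, ha, hb, hanm, hbnm, Ne.symm hab, Ne.symm hanm, Ne.symm hbnm, Finset.mem_erase, hab]
  exact systemK_eq_of_conj F g0 hpgF hpgB hlPF hlPB hlQF hlQB hone
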